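/- Let ι be a finite nonempty type and let C ⊆ ℝ × (ι → ℝ) be a nonempty, bounded, convex set (the set of achievable (reward, constraint-cost) pairs). Assume Slater's condition: there exists (r₀, c₀) ∈ C with c₀ i < 0 for every i. Define the primal optimal value P* := sSup {r : ℝ | ∃ c, (r, c) ∈ C ∧ ∀ i, c i ≤ 0} and, for each λ : ι → ℝ with λ i ≥ 0 for all i, the dual function d(λ) := sSup {r − ∑ i, λ i * c i | (r, c) ∈ C}. Then strong duality holds: ⨅ over {λ : ι → ℝ | ∀ i, λ i ≥ 0} of d(λ) equals P*. -/

import Mathlib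

/-- Helper: if `α * t ≤ K` for all positive `t`, then `α ≤ 0`. -/
lemma aux_nonpos_of_mul_le {α K : ℝ} (h : ∀ t : ℝ, 0 < t → α * t ≤ K) : α ≤ 0 := by
  by_contra h'
  push_neg at h'
  have h1 := h 1 one_pos
  rw [mul_one] at h1
  have hK1 : 0 < K + 1 := by linarith
  have h2 := h ((K + 1) / α) (div_pos hK1 h')
  rw [mul_div_cancel₀ _ (ne_of_gt h')] at h2
  linarith

/-- Strong duality for the constrained problem over a nonempty,
bounded, convex achievable set `C ⊆ ℝ × (ι → ℝ)` under Slater's condition. -/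
theorem strong_duality_achievable_set
    {ι : Type*} [Fintype ι] [Nonempty ι]
    (C : Set (ℝ × (ι → ℝ)))
    (hne : C.Nonempty)
    (hbd : Bornology.IsBounded C)
    (hconv : Convex ℝ C)
    (slater : ∃ p ∈ C, ∀ i, p.2 i < 0) :
    (⨅ lam : {l : ι → ℝ // ∀ i, 0 ≤ l i},
        sSup {v : ℝ | ∃ p ∈ C, v = p.1 - ∑ i, lam.1 i * p.2 i})
      = sSup {r : ℝ | ∃ c, (r, c) ∈ C ∧ ∀ i, c i ≤ 0} := by
  classical
  have hnesub : Nonempty {l : ι → ℝ // ∀ i, 0 ≤ l i} := ⟨⟨0, fun i => le_refl 0⟩⟩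
  obtain ⟨p₀, hp₀C, hp₀⟩ := slater
  set S : Set ℝ := {r : ℝ | ∃ c, (r, c) ∈ C ∧ ∀ i, c i ≤ 0} with hSdef
  obtain ⟨M, hM⟩ := isBounded_iff_forall_norm_le.mp hbd
  have hfst : ∀ p ∈ C, |p.1| ≤ M := by
    intro p hp
    calc |p.1| = ‖p.1‖ := rfl
    _ ≤ ‖p‖ := norm_fst_le p
    _ ≤ M := hM p hp
  have hsnd : ∀ p ∈ C, ∀ i, |p.2 i| ≤ M := by
    intro p hp i
    calc |p.2 i| = ‖p.2 i‖ := rfl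
    _ ≤ ‖p.2‖ := norm_le_pi_norm p.2 i
    _ ≤ ‖p‖ := norm_snd_le p
    _ ≤ M := hM p hp
  have hSne : S.Nonempty := ⟨p₀.1, p₀.2, by simpa using hp₀C, fun i => (hp₀ i).le⟩
  have hSbdd : BddAbove S := by
    refine ⟨M, ?_⟩
    rintro r ⟨c, hc, -⟩
    exact le_trans (le_abs_self r) (hfst (r, c) hc)
  set Pstar := sSup S with hPdef
  -- Weak duality
  have hweak : ∀ l : ι → ℝ, (∀ i, 0 ≤ l i) →
      Pstar ≤ sSup {v : ℝ | ∃ p ∈ C, v = p.1 - ∑ i, l i * p.2 i} := by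
    intro l hl
    have hDbdd : BddAbove {v : ℝ | ∃ p ∈ C, v = p.1 - ∑ i, l i * p.2 i} := by
      refine ⟨M + ∑ i, l i * M, ?_⟩
      rintro v ⟨p, hp, rfl⟩
      have h1 : p.1 ≤ M := le_trans (le_abs_self _) (hfst p hp)
      have h2 : ∀ i, -(l i * p.2 i) ≤ l i * M := by
        intro i
        have := abs_le.mp (hsnd p hp i)
        nlinarith [hl i]
      have h3 : -(∑ i, l i * p.2 i) ≤ ∑ i, l i * M := by
        rw [← Finset.sum_neg_distrib]
        exact Finset.sum_le_sum fun i _ => h2 i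
      linarith
    apply csSup_le hSne
    rintro r ⟨c, hcC, hc⟩
    have h2 : ∑ i, l i * c i ≤ 0 :=
      Finset.sum_nonpos fun i _ => mul_nonpos_of_nonneg_of_nonpos (hl i) (hc i)
    have h1 : r - ∑ i, l i * c i ∈ {v : ℝ | ∃ p ∈ C, v = p.1 - ∑ i, l i * p.2 i} :=
      ⟨(r, c), hcC, rfl⟩
    calc r ≤ r - ∑ i, l i * c i := by linarith
    _ ≤ _ := le_csSup hDbdd h1
  -- The open set to separate from C
  set O : Set (ℝ × (ι → ℝ)) := {p | Pstar < p.1} ∩ ⋂ i, {p | p.2 i < 0} with hOdef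
  have hOmem : ∀ p : ℝ × (ι → ℝ), p ∈ O ↔ Pstar < p.1 ∧ ∀ i, p.2 i < 0 := by
    intro p; simp [hOdef, Set.mem_iInter]
  have hOopen : IsOpen O := by
    apply IsOpen.inter
    · exact isOpen_lt continuous_const continuous_fst
    · exact isOpen_iInter_of_finite fun i =>
        isOpen_lt ((continuous_apply i).comp continuous_snd) continuous_const
  have hOconv : Convex ℝ O := by
    apply Convex.inter
    · exact convex_halfSpace_gt ⟨fun _ _ => rfl, fun _ _ => rfl⟩ Pstar
    · exact convex_iInter fun i =>
        convex_halfSpace_lt ⟨fun _ _ => rfl, fun _ _ => rfl⟩ 0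
  have hdisj : Disjoint O C := by
    rw [Set.disjoint_left]
    intro p hpO hpC
    obtain ⟨h1, h2⟩ := (hOmem p).mp hpO
    have : p.1 ∈ S := ⟨p.2, by simpa using hpC, fun i => (h2 i).le⟩
    exact absurd (le_csSup hSbdd this) (not_le.mpr h1)
  obtain ⟨f, u, hfO, hfC⟩ := geometric_hahn_banach_open hOconv hOopen hconv hdisj
  set α : ℝ := f (1, 0) with hαdef
  set β : ι → ℝ := fun i => f (0, Pi.single i 1) with hβdef
  -- evaluation formula for f
  have hf_eval : ∀ p : ℝ × (ι → ℝ), f p = α * p.1 + ∑ i, β i * p.2 i := by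
    intro p
    have h1 : (p : ℝ × (ι → ℝ)) =
        p.1 • ((1 : ℝ), (0 : ι → ℝ)) + ∑ i, p.2 i • (((0 : ℝ), Pi.single i (1 : ℝ)) : ℝ × (ι → ℝ)) := by
      have h2 : (∑ i, p.2 i • (((0 : ℝ), Pi.single i (1 : ℝ)) : ℝ × (ι → ℝ)))
          = ((0 : ℝ), p.2) := by
        apply Prod.ext
        · simp [Prod.fst_sum]
        · rw [Prod.snd_sum]
          simp only [Prod.smul_mk]
          rw [← Finset.univ_sum_single p.2]
          congr 1
          funext i
          rw [← Pi.single_smul, smul_eq_mul, mul_one, Finset.univ_sum_single]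
      rw [h2]
      ext <;> simp
    conv_lhs => rw [h1]
    rw [map_add, map_smul, map_sum]
    simp only [map_smul, smul_eq_mul, ← hαdef]
    rw [mul_comm]
    congr 1
    exact Finset.sum_congr rfl fun i _ => mul_comm _ _
  -- properties of the separating functional
  have hαle : α ≤ 0 := by
    apply aux_nonpos_of_mul_le (K := u - α * Pstar + ∑ i, β i)
    intro t ht
    have hmem : ((Pstar + t, fun _ => (-1 : ℝ)) : ℝ × (ι → ℝ)) ∈ O :=
      (hOmem _).mpr ⟨by simpa using ht, fun i => by norm_num⟩
    have := hfO _ hmem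
    rw [hf_eval] at this
    simp only [mul_neg, mul_one] at this
    rw [Finset.sum_neg_distrib] at this
    nlinarith
  have hβnn : ∀ i, 0 ≤ β i := by
    intro i
    rw [← neg_nonpos]
    apply aux_nonpos_of_mul_le (K := u - α * (Pstar + 1) + ∑ j, β j)
    intro s hs
    have hmem : ((Pstar + 1, fun j => -1 + (-s) * (Pi.single i (1 : ℝ) : ι → ℝ) j) : ℝ × (ι → ℝ)) ∈ O := by
      refine (hOmem _).mpr ⟨by simp, fun j => ?_⟩
      by_cases hj : j = i
      · subst hj; simp [Pi.single_apply]; linarith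
      · simp [Pi.single_apply, hj]
    have := hfO _ hmem
    rw [hf_eval] at this
    simp only at this
    have hsum : (∑ j, β j * (-1 + (-s) * (Pi.single i (1 : ℝ) : ι → ℝ) j))
        = -(∑ j, β j) + (-s) * β i := by
      calc ∑ j, β j * (-1 + (-s) * (Pi.single i (1 : ℝ) : ι → ℝ) j)
          = ∑ j, (-(β j) + (-s) * (β j * (Pi.single i (1 : ℝ) : ι → ℝ) j)) :=
            Finset.sum_congr rfl fun j _ => by ring
        _ = -(∑ j, β j) + (-s) * β i := by
            rw [Finset.sum_add_distrib]
            congr 1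
            · rw [Finset.sum_neg_distrib]
            · rw [← Finset.mul_sum]
              congr 1
              simp [Pi.single_apply, mul_ite, Finset.sum_ite_eq']
    rw [hsum] at this
    nlinarith
  have hBnn : 0 ≤ ∑ i, β i := Finset.sum_nonneg fun i _ => hβnn i
  have hkey : α * Pstar ≤ u := by
    apply le_of_forall_pos_le_add
    intro ε hε
    set δ : ℝ := ε / (∑ i, β i - α + 1) with hδdef
    have hden : 0 < ∑ i, β i - α + 1 := by linarith
    have hδ : 0 < δ := div_pos hε hden
    have hmem : ((Pstar + δ, fun _ => (-δ : ℝ)) : ℝ × (ι → ℝ)) ∈ O :=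
      (hOmem _).mpr ⟨by simpa using hδ, fun i => by simpa using hδ⟩
    have h1 := hfO _ hmem
    rw [hf_eval] at h1
    simp only [mul_neg] at h1
    rw [Finset.sum_neg_distrib] at h1
    have h2 : (∑ i, β i * δ) = (∑ i, β i) * δ := by rw [Finset.sum_mul]
    rw [h2] at h1
    have h3 : δ * (∑ i, β i - α + 1) = ε := by
      rw [hδdef]; field_simp
    nlinarith
  have hαlt : α < 0 := by
    rcases lt_or_eq_of_le hαle with h | h
    · exact h
    exfalso
    -- α = 0 case
    have hα0 : α = 0 := h
    have hu0 : 0 ≤ u := by rw [hα0] at hkey; linarith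
    have h1 : u ≤ ∑ i, β i * p₀.2 i := by
      have := hfC _ hp₀C
      rw [hf_eval, hα0] at this
      linarith
    have h2 : ∑ i, β i * p₀.2 i ≤ 0 :=
      Finset.sum_nonpos fun i _ => mul_nonpos_of_nonneg_of_nonpos (hβnn i) (hp₀ i).le
    have h3 : ∀ i ∈ Finset.univ, β i * p₀.2 i = 0 := by
      apply (Finset.sum_eq_zero_iff_of_nonpos
        (fun i _ => mul_nonpos_of_nonneg_of_nonpos (hβnn i) (hp₀ i).le)).mp
      linarith
    have hβ0 : ∀ i, β i = 0 := by
      intro i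
      have := h3 i (Finset.mem_univ i)
      rcases mul_eq_zero.mp this with h4 | h4
      · exact h4
      · exact absurd h4 (ne_of_lt (hp₀ i))
    -- but then f < u on nonempty O gives 0 < u ≤ 0
    have hmem : ((Pstar + 1, fun _ => (-1 : ℝ)) : ℝ × (ι → ℝ)) ∈ O :=
      (hOmem _).mpr ⟨by norm_num, fun i => by norm_num⟩
    have h5 := hfO _ hmem
    rw [hf_eval, hα0] at h5
    simp only [hβ0, zero_mul, Finset.sum_const_zero] at h5
    have h6 : u ≤ 0 := by linarith [h1, h2]
    linarith
  have hnegα : 0 < -α := by linarith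
  -- the dual multiplier
  set lam : ι → ℝ := fun i => β i / (-α) with hlamdef
  have hlamnn : ∀ i, 0 ≤ lam i := fun i => div_nonneg (hβnn i) hnegα.le
  -- strong direction: d(lam) ≤ Pstar
  have hstrong : sSup {v : ℝ | ∃ p ∈ C, v = p.1 - ∑ i, lam i * p.2 i} ≤ Pstar := by
    refine csSup_le ⟨p₀.1 - ∑ i, lam i * p₀.2 i, ⟨p₀, hp₀C, rfl⟩⟩ ?_
    rintro v ⟨p, hpC, rfl⟩
    have h1 := hfC _ hpC
    rw [hf_eval] at h1
    have h2 : α * Pstar ≤ α * p.1 + ∑ i, β i * p.2 i := le_trans hkey h1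
    have h3 : ∑ i, lam i * p.2 i = (∑ i, β i * p.2 i) / (-α) := by
      rw [Finset.sum_div]
      exact Finset.sum_congr rfl fun i _ => by rw [hlamdef, div_mul_eq_mul_div]
    rw [h3]
    rw [sub_le_iff_le_add, ← sub_le_iff_le_add', le_div_iff₀ hnegα]
    nlinarith
  -- bounded below: weak duality
  have hbddBelow : BddBelow (Set.range fun l : {l : ι → ℝ // ∀ i, 0 ≤ l i} =>
      sSup {v : ℝ | ∃ p ∈ C, v = p.1 - ∑ i, l.1 i * p.2 i}) := by
    refine ⟨Pstar, ?_⟩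
    rintro x ⟨l, rfl⟩
    exact hweak l.1 l.2
  apply le_antisymm
  · exact ciInf_le_of_le hbddBelow ⟨lam, hlamnn⟩ hstrong
  · exact le_ciInf fun l => hweak l.1 l.2
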